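/- There exists κ > 0, depending only on c1, c2, σ0, σ1, such that for every Φ ∈ ℝ⁴ with |Φ| < 2κ and φ2 ≠ 0, the quantities K(Φ) and N(Φ) are nonzero and the left and right eigenvectors are dual to each other: lᵢ(Φ) · rⱼ(Φ) = δᵢⱼ for all i, j ∈ {1,2,3,4}, where · is the Euclidean inner product and δᵢⱼ is the Kronecker delta. -/

import Mathlib

noncomputable section

open Real Matrix Set

namespace ElasticIP

/-- Euclidean norm on `ℝ⁴` (presented as `Fin 4 → ℝ`). -/
def eucNorm4 (Φ : Fin 4 → ℝ) : ℝ := Real.sqrt (∑ i, (Φ i) ^ 2)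

/-- `a(Φ) = c₁² + 2σ₀φ₁`. -/
def aF (c1 σ0 : ℝ) (Φ : Fin 4 → ℝ) : ℝ := c1 ^ 2 + 2 * σ0 * Φ 0

/-- `b(Φ) = c₂² + 2σ₁φ₁`. -/
def bF (c2 σ1 : ℝ) (Φ : Fin 4 → ℝ) : ℝ := c2 ^ 2 + 2 * σ1 * Φ 0

/-- `c(Φ) = 2σ₁φ₂`. -/
def cF (σ1 : ℝ) (Φ : Fin 4 → ℝ) : ℝ := 2 * σ1 * Φ 1

/-- `Δ = (a-b)² + 4c²`. -/
def ΔF (c1 c2 σ0 σ1 : ℝ) (Φ : Fin 4 → ℝ) : ℝ :=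
  (aF c1 σ0 Φ - bF c2 σ1 Φ) ^ 2 + 4 * cF σ1 Φ ^ 2

/-- The coefficient matrix `A(Φ)` of the first-order system. -/
def AM (c1 c2 σ0 σ1 : ℝ) (Φ : Fin 4 → ℝ) : Matrix (Fin 4) (Fin 4) ℝ :=
  !![0, 0, -1, 0;
     0, 0, 0, -1;
     -aF c1 σ0 Φ, -cF σ1 Φ, 0, 0;
     -cF σ1 Φ, -bF c2 σ1 Φ, 0, 0]

/-- `λ₁ = √(((a+b)+√Δ)/2)`. -/
def lam1 (c1 c2 σ0 σ1 : ℝ) (Φ : Fin 4 → ℝ) : ℝ :=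
  Real.sqrt ((aF c1 σ0 Φ + bF c2 σ1 Φ + Real.sqrt (ΔF c1 c2 σ0 σ1 Φ)) / 2)

/-- `λ₂ = √(((a+b)-√Δ)/2)`. -/
def lam2 (c1 c2 σ0 σ1 : ℝ) (Φ : Fin 4 → ℝ) : ℝ :=
  Real.sqrt ((aF c1 σ0 Φ + bF c2 σ1 Φ - Real.sqrt (ΔF c1 c2 σ0 σ1 Φ)) / 2)

/-- `λ₃ = -λ₂`. -/
def lam3 (c1 c2 σ0 σ1 : ℝ) (Φ : Fin 4 → ℝ) : ℝ := - lam2 c1 c2 σ0 σ1 Φ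

/-- `λ₄ = -λ₁`. -/
def lam4 (c1 c2 σ0 σ1 : ℝ) (Φ : Fin 4 → ℝ) : ℝ := - lam1 c1 c2 σ0 σ1 Φ

/-- Right eigenvector `r₁`. -/
def r1 (c1 c2 σ0 σ1 : ℝ) (Φ : Fin 4 → ℝ) : Fin 4 → ℝ :=
  ![(lam1 c1 c2 σ0 σ1 Φ ^ 2 - bF c2 σ1 Φ) / (2 * σ1),
    Φ 1,
    -(lam1 c1 c2 σ0 σ1 Φ * (lam1 c1 c2 σ0 σ1 Φ ^ 2 - bF c2 σ1 Φ)) / (2 * σ1),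
    -(lam1 c1 c2 σ0 σ1 Φ) * Φ 1]

/-- Right eigenvector `r₂`. -/
def r2 (c1 c2 σ0 σ1 : ℝ) (Φ : Fin 4 → ℝ) : Fin 4 → ℝ :=
  ![(lam2 c1 c2 σ0 σ1 Φ ^ 2 - bF c2 σ1 Φ) / (2 * σ1),
    Φ 1,
    -(lam2 c1 c2 σ0 σ1 Φ * (lam2 c1 c2 σ0 σ1 Φ ^ 2 - bF c2 σ1 Φ)) / (2 * σ1),
    -(lam2 c1 c2 σ0 σ1 Φ) * Φ 1]

/-- Right eigenvector `r₃`. -/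
def r3 (c1 c2 σ0 σ1 : ℝ) (Φ : Fin 4 → ℝ) : Fin 4 → ℝ :=
  ![(lam2 c1 c2 σ0 σ1 Φ ^ 2 - bF c2 σ1 Φ) / (2 * σ1),
    Φ 1,
    lam2 c1 c2 σ0 σ1 Φ * (lam2 c1 c2 σ0 σ1 Φ ^ 2 - bF c2 σ1 Φ) / (2 * σ1),
    lam2 c1 c2 σ0 σ1 Φ * Φ 1]

/-- Right eigenvector `r₄`. -/
def r4 (c1 c2 σ0 σ1 : ℝ) (Φ : Fin 4 → ℝ) : Fin 4 → ℝ :=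
  ![(lam1 c1 c2 σ0 σ1 Φ ^ 2 - bF c2 σ1 Φ) / (2 * σ1),
    Φ 1,
    lam1 c1 c2 σ0 σ1 Φ * (lam1 c1 c2 σ0 σ1 Φ ^ 2 - bF c2 σ1 Φ) / (2 * σ1),
    lam1 c1 c2 σ0 σ1 Φ * Φ 1]

/-- `K = (Δ + (a-b)√Δ)/(4σ₁²)`. -/
def KF (c1 c2 σ0 σ1 : ℝ) (Φ : Fin 4 → ℝ) : ℝ :=
  (ΔF c1 c2 σ0 σ1 Φ + (aF c1 σ0 Φ - bF c2 σ1 Φ) * Real.sqrt (ΔF c1 c2 σ0 σ1 Φ)) / (4 * σ1 ^ 2)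

/-- `N = (Δ - (a-b)√Δ)/(4σ₁²)`. -/
def NF (c1 c2 σ0 σ1 : ℝ) (Φ : Fin 4 → ℝ) : ℝ :=
  (ΔF c1 c2 σ0 σ1 Φ - (aF c1 σ0 Φ - bF c2 σ1 Φ) * Real.sqrt (ΔF c1 c2 σ0 σ1 Φ)) / (4 * σ1 ^ 2)

/-- Left eigenvector `l₁`. -/
def l1 (c1 c2 σ0 σ1 : ℝ) (Φ : Fin 4 → ℝ) : Fin 4 → ℝ :=
  (KF c1 c2 σ0 σ1 Φ)⁻¹ •
    ![(lam1 c1 c2 σ0 σ1 Φ ^ 2 - bF c2 σ1 Φ) / (2 * σ1),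
      Φ 1,
      -((lam1 c1 c2 σ0 σ1 Φ ^ 2 - bF c2 σ1 Φ) / (2 * σ1 * lam1 c1 c2 σ0 σ1 Φ)),
      -(Φ 1 / lam1 c1 c2 σ0 σ1 Φ)]

/-- Left eigenvector `l₂`. -/
def l2 (c1 c2 σ0 σ1 : ℝ) (Φ : Fin 4 → ℝ) : Fin 4 → ℝ :=
  (NF c1 c2 σ0 σ1 Φ)⁻¹ •
    ![(lam2 c1 c2 σ0 σ1 Φ ^ 2 - bF c2 σ1 Φ) / (2 * σ1),
      Φ 1,
      -((lam2 c1 c2 σ0 σ1 Φ ^ 2 - bF c2 σ1 Φ) / (2 * σ1 * lam2 c1 c2 σ0 σ1 Φ)),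
      -(Φ 1 / lam2 c1 c2 σ0 σ1 Φ)]

/-- Left eigenvector `l₃`. -/
def l3 (c1 c2 σ0 σ1 : ℝ) (Φ : Fin 4 → ℝ) : Fin 4 → ℝ :=
  (NF c1 c2 σ0 σ1 Φ)⁻¹ •
    ![(lam2 c1 c2 σ0 σ1 Φ ^ 2 - bF c2 σ1 Φ) / (2 * σ1),
      Φ 1,
      (lam2 c1 c2 σ0 σ1 Φ ^ 2 - bF c2 σ1 Φ) / (2 * σ1 * lam2 c1 c2 σ0 σ1 Φ),
      Φ 1 / lam2 c1 c2 σ0 σ1 Φ]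

/-- Left eigenvector `l₄`. -/
def l4 (c1 c2 σ0 σ1 : ℝ) (Φ : Fin 4 → ℝ) : Fin 4 → ℝ :=
  (KF c1 c2 σ0 σ1 Φ)⁻¹ •
    ![(lam1 c1 c2 σ0 σ1 Φ ^ 2 - bF c2 σ1 Φ) / (2 * σ1),
      Φ 1,
      (lam1 c1 c2 σ0 σ1 Φ ^ 2 - bF c2 σ1 Φ) / (2 * σ1 * lam1 c1 c2 σ0 σ1 Φ),
      Φ 1 / lam1 c1 c2 σ0 σ1 Φ]

/-- Indexed eigenvalues `λᵢ`, `i = 1,…,4` realised as `i : Fin 4`. -/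
def lamI (c1 c2 σ0 σ1 : ℝ) (i : Fin 4) (Φ : Fin 4 → ℝ) : ℝ :=
  match i with
  | 0 => lam1 c1 c2 σ0 σ1 Φ
  | 1 => lam2 c1 c2 σ0 σ1 Φ
  | 2 => lam3 c1 c2 σ0 σ1 Φ
  | 3 => lam4 c1 c2 σ0 σ1 Φ

/-- Indexed right eigenvectors `rᵢ`. -/
def rI (c1 c2 σ0 σ1 : ℝ) (i : Fin 4) (Φ : Fin 4 → ℝ) : Fin 4 → ℝ :=
  match i with
  | 0 => r1 c1 c2 σ0 σ1 Φ
  | 1 => r2 c1 c2 σ0 σ1 Φ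
  | 2 => r3 c1 c2 σ0 σ1 Φ
  | 3 => r4 c1 c2 σ0 σ1 Φ

/-- Indexed left eigenvectors `lᵢ`. -/
def lI (c1 c2 σ0 σ1 : ℝ) (i : Fin 4) (Φ : Fin 4 → ℝ) : Fin 4 → ℝ :=
  match i with
  | 0 => l1 c1 c2 σ0 σ1 Φ
  | 1 => l2 c1 c2 σ0 σ1 Φ
  | 2 => l3 c1 c2 σ0 σ1 Φ
  | 3 => l4 c1 c2 σ0 σ1 Φ

/-- Jacobian matrix of a map `ℝ⁴ → ℝ⁴`. -/
def jac (f : (Fin 4 → ℝ) → (Fin 4 → ℝ)) (Φ : Fin 4 → ℝ) : Matrix (Fin 4) (Fin 4) ℝ :=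
  fun i j => fderiv ℝ (fun Ψ => f Ψ i) Φ (Pi.single j 1)

/-- `cⁱᵢₘ(Φ) = ∇λᵢ(Φ) · rₘ(Φ)`. -/
def cCo (c1 c2 σ0 σ1 : ℝ) (i m : Fin 4) (Φ : Fin 4 → ℝ) : ℝ :=
  fderiv ℝ (lamI c1 c2 σ0 σ1 i) Φ (rI c1 c2 σ0 σ1 m Φ)

/-- `γⁱᵢₘ(Φ) = -(λᵢ-λₘ) lᵢ · (Drᵢ rₘ - Drₘ rᵢ)`. -/
def gammaII (c1 c2 σ0 σ1 : ℝ) (i m : Fin 4) (Φ : Fin 4 → ℝ) : ℝ :=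
  -(lamI c1 c2 σ0 σ1 i Φ - lamI c1 c2 σ0 σ1 m Φ) *
    (lI c1 c2 σ0 σ1 i Φ ⬝ᵥ
      (jac (rI c1 c2 σ0 σ1 i) Φ *ᵥ rI c1 c2 σ0 σ1 m Φ -
        jac (rI c1 c2 σ0 σ1 m) Φ *ᵥ rI c1 c2 σ0 σ1 i Φ))

/-- `γⁱₖₘ(Φ) = -(λₖ-λₘ) lᵢ · (Drₖ rₘ)`. -/
def gammaKM (c1 c2 σ0 σ1 : ℝ) (i k m : Fin 4) (Φ : Fin 4 → ℝ) : ℝ :=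
  -(lamI c1 c2 σ0 σ1 k Φ - lamI c1 c2 σ0 σ1 m Φ) *
    (lI c1 c2 σ0 σ1 i Φ ⬝ᵥ (jac (rI c1 c2 σ0 σ1 k) Φ *ᵥ rI c1 c2 σ0 σ1 m Φ))


private lemma dual_aux {k x1 x2 x3 x4 y1 y2 y3 y4 : ℝ} (hk : k ≠ 0)
    (h : x1 * y1 + x2 * y2 + x3 * y3 + x4 * y4 = k) :
    k⁻¹ * x1 * y1 + k⁻¹ * x2 * y2 + k⁻¹ * x3 * y3 + k⁻¹ * x4 * y4 = 1 := by
  field_simp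
  linear_combination h

private lemma dual_aux0 {k x1 x2 x3 x4 y1 y2 y3 y4 : ℝ}
    (h : x1 * y1 + x2 * y2 + x3 * y3 + x4 * y4 = 0) :
    k⁻¹ * x1 * y1 + k⁻¹ * x2 * y2 + k⁻¹ * x3 * y3 + k⁻¹ * x4 * y4 = 0 := by
  linear_combination k⁻¹ * h

set_option maxHeartbeats 4000000

/-- Duality of the left and right eigenvectors: there is `κ > 0` such that for
`|Φ| < 2κ` and `φ₂ ≠ 0`, the factors `K(Φ)`, `N(Φ)` are nonzero and `lᵢ(Φ) · rⱼ(Φ) = δᵢⱼ`. -/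


theorem left_right_duality (c1 c2 σ0 σ1 : ℝ) (hc2 : 0 < c2) (hc12 : c2 < c1) (hσ1 : σ1 ≠ 0) :
    ∃ κ > (0:ℝ), ∀ Φ : Fin 4 → ℝ, eucNorm4 Φ < 2 * κ → Φ 1 ≠ 0 →
      KF c1 c2 σ0 σ1 Φ ≠ 0 ∧ NF c1 c2 σ0 σ1 Φ ≠ 0 ∧
      ∀ i j : Fin 4,
        lI c1 c2 σ0 σ1 i Φ ⬝ᵥ rI c1 c2 σ0 σ1 j Φ = if i = j then 1 else 0 := by
  have hc1 : 0 < c1 := hc2.trans hc12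
  obtain ⟨M, hMdef, hMge⟩ : ∃ M : ℝ, M = max |σ0| |σ1| + 1 ∧ max |σ0| |σ1| + 1 ≤ M :=
    ⟨max |σ0| |σ1| + 1, rfl, le_refl _⟩
  have hM : 0 < M := by rw [hMdef]; positivity
  refine ⟨c2 ^ 2 / (8 * M), by positivity, ?_⟩
  intro Φ hΦ hφ2
  have hΦ' : eucNorm4 Φ < c2 ^ 2 / (4 * M) := by
    have h2M : (2:ℝ) * (c2 ^ 2 / (8 * M)) = c2 ^ 2 / (4 * M) := by
      field_simp
      ring
    linarith [hΦ, h2M.le, h2M.ge]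
  have hcomp : ∀ i : Fin 4, |Φ i| ≤ eucNorm4 Φ := by
    intro i
    rw [eucNorm4, ← Real.sqrt_sq_eq_abs]
    exact Real.sqrt_le_sqrt
      (Finset.single_le_sum (fun j _ => sq_nonneg (Φ j)) (Finset.mem_univ i))
  have hbnd : ∀ (σ : ℝ) (i : Fin 4), |σ| ≤ max |σ0| |σ1| → |2 * σ * Φ i| < c2 ^ 2 / 2 := by
    intro σ i hσ
    have h1 : |Φ i| < c2 ^ 2 / (4 * M) := lt_of_le_of_lt (hcomp i) hΦ'
    have h2 : |2 * σ * Φ i| = 2 * |σ| * |Φ i| := by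
      rw [abs_mul, abs_mul]; simp
    have h3 : |σ| + 1 ≤ M := le_trans (by linarith) hMge
    have h4 := abs_nonneg (Φ i)
    have h5 := abs_nonneg σ
    rw [h2]
    calc 2 * |σ| * |Φ i| ≤ 2 * M * |Φ i| := by nlinarith
      _ < 2 * M * (c2 ^ 2 / (4 * M)) := by
          have := mul_pos (mul_pos (show (0:ℝ) < 2 by norm_num) hM)
            (show (0:ℝ) < c2 ^ 2 / (4 * M) by positivity)
          nlinarith
      _ = c2 ^ 2 / 2 := by field_simp; ring
  have hb0 := abs_lt.mp (hbnd σ0 0 (le_max_left _ _))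
  have hb1 := abs_lt.mp (hbnd σ1 0 (le_max_right _ _))
  have hb2 := abs_lt.mp (hbnd σ1 1 (le_max_right _ _))
  have ha : c1 ^ 2 / 2 < aF c1 σ0 Φ := by rw [aF]; nlinarith
  have hb : c2 ^ 2 / 2 < bF c2 σ1 Φ := by rw [bF]; nlinarith
  have hcne : cF σ1 Φ ≠ 0 := by
    rw [cF]; exact mul_ne_zero (mul_ne_zero two_ne_zero hσ1) hφ2
  have hcpos : 0 < cF σ1 Φ ^ 2 :=
    lt_of_le_of_ne (sq_nonneg _) (Ne.symm (pow_ne_zero 2 hcne))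
  have hcab : cF σ1 Φ ^ 2 < aF c1 σ0 Φ * bF c2 σ1 Φ := by
    have h5 : |cF σ1 Φ| < c2 ^ 2 / 2 := hbnd σ1 1 (le_max_right _ _)
    have h6 : cF σ1 Φ ^ 2 < (c2 ^ 2 / 2) ^ 2 := by
      have := abs_nonneg (cF σ1 Φ); nlinarith [sq_abs (cF σ1 Φ)]
    have step : c1 ^ 2 / 2 * (c2 ^ 2 / 2) < aF c1 σ0 Φ * bF c2 σ1 Φ :=
      mul_lt_mul'' ha hb (by positivity) (by positivity)
    have hcc : c2 ^ 2 ≤ c1 ^ 2 := by nlinarith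
    nlinarith [mul_le_mul_of_nonneg_right hcc (sq_nonneg c2)]
  clear hbnd hcomp hΦ hΦ' hMge hMdef hM
  have hΔpos : 0 < ΔF c1 c2 σ0 σ1 Φ := by
    rw [ΔF]
    linarith [sq_nonneg (aF c1 σ0 Φ - bF c2 σ1 Φ), hcpos]
  have hsΔ : Real.sqrt (ΔF c1 c2 σ0 σ1 Φ) ^ 2 = ΔF c1 c2 σ0 σ1 Φ := Real.sq_sqrt hΔpos.le
  have hspos : 0 < Real.sqrt (ΔF c1 c2 σ0 σ1 Φ) := Real.sqrt_pos.mpr hΔpos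
  set s := Real.sqrt (ΔF c1 c2 σ0 σ1 Φ) with hsdef
  clear_value s
  have hA0 : 0 < aF c1 σ0 Φ := lt_trans (by positivity) ha
  have hB0 : 0 < bF c2 σ1 Φ := lt_trans (by positivity) hb
  have hs2 : s ^ 2 = (aF c1 σ0 Φ - bF c2 σ1 Φ) ^ 2 + 4 * cF σ1 Φ ^ 2 := by rw [hsΔ, ΔF]
  have hsq : (aF c1 σ0 Φ - bF c2 σ1 Φ) ^ 2 < s ^ 2 := by linarith
  have habs1 : aF c1 σ0 Φ - bF c2 σ1 Φ < s := lt_of_pow_lt_pow_left₀ 2 hspos.le hsq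
  have habs2 : bF c2 σ1 Φ - aF c1 σ0 Φ < s := by
    refine lt_of_pow_lt_pow_left₀ 2 hspos.le ?_
    calc (bF c2 σ1 Φ - aF c1 σ0 Φ) ^ 2 = (aF c1 σ0 Φ - bF c2 σ1 Φ) ^ 2 := by ring
      _ < s ^ 2 := hsq
  have hssum : s < aF c1 σ0 Φ + bF c2 σ1 Φ := by
    have h7 : s ^ 2 < (aF c1 σ0 Φ + bF c2 σ1 Φ) ^ 2 := by rw [hs2]; linarith [hcab]
    exact lt_of_pow_lt_pow_left₀ 2 (by linarith) h7
  have hs2' : s ^ 2 = (aF c1 σ0 Φ - bF c2 σ1 Φ) ^ 2 + 4 * (2 * σ1 * Φ 1) ^ 2 := by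
    rw [hs2, cF]
  have hL1sq : lam1 c1 c2 σ0 σ1 Φ ^ 2 = (aF c1 σ0 Φ + bF c2 σ1 Φ + s) / 2 := by
    rw [lam1, ← hsdef]
    exact Real.sq_sqrt (by linarith)
  have hL1pos : 0 < lam1 c1 c2 σ0 σ1 Φ := by
    rw [lam1, ← hsdef]
    exact Real.sqrt_pos.mpr (by linarith)
  have hL2sq : lam2 c1 c2 σ0 σ1 Φ ^ 2 = (aF c1 σ0 Φ + bF c2 σ1 Φ - s) / 2 := by
    rw [lam2, ← hsdef]
    exact Real.sq_sqrt (by linarith)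
  have hL2pos : 0 < lam2 c1 c2 σ0 σ1 Φ := by
    rw [lam2, ← hsdef]
    exact Real.sqrt_pos.mpr (by linarith)
  have hK0 : 0 < KF c1 c2 σ0 σ1 Φ := by
    rw [KF, ← hsdef, ← hsΔ]
    apply div_pos ?_ (by positivity)
    have h8 : 0 < s * (s + (aF c1 σ0 Φ - bF c2 σ1 Φ)) := mul_pos hspos (by linarith)
    linarith [h8]
  have hN0 : 0 < NF c1 c2 σ0 σ1 Φ := by
    rw [NF, ← hsdef, ← hsΔ]
    apply div_pos ?_ (by positivity)
    have h8 : 0 < s * (s - (aF c1 σ0 Φ - bF c2 σ1 Φ)) := mul_pos hspos (by linarith)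
    linarith [h8]
  have hKv : KF c1 c2 σ0 σ1 Φ =
      2 * ((lam1 c1 c2 σ0 σ1 Φ ^ 2 - bF c2 σ1 Φ) / (2 * σ1)) ^ 2 + 2 * (Φ 1) ^ 2 := by
    rw [KF, ← hsdef, ← hsΔ, hL1sq]
    field_simp
    linear_combination 4 * hs2'
  have hNv : NF c1 c2 σ0 σ1 Φ =
      2 * ((lam2 c1 c2 σ0 σ1 Φ ^ 2 - bF c2 σ1 Φ) / (2 * σ1)) ^ 2 + 2 * (Φ 1) ^ 2 := by
    rw [NF, ← hsdef, ← hsΔ, hL2sq]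
    field_simp
    linear_combination 4 * hs2'
  have hpp : ((lam1 c1 c2 σ0 σ1 Φ ^ 2 - bF c2 σ1 Φ) / (2 * σ1)) *
      ((lam2 c1 c2 σ0 σ1 Φ ^ 2 - bF c2 σ1 Φ) / (2 * σ1)) = -(Φ 1) ^ 2 := by
    rw [hL1sq, hL2sq]
    field_simp
    linear_combination -hs2'
  refine ⟨hK0.ne', hN0.ne', ?_⟩
  intro i j
  have hL1 : lam1 c1 c2 σ0 σ1 Φ ≠ 0 := hL1pos.ne'
  have hL2 : lam2 c1 c2 σ0 σ1 Φ ≠ 0 := hL2pos.ne'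
  have hKne : KF c1 c2 σ0 σ1 Φ ≠ 0 := hK0.ne'
  have hNne : NF c1 c2 σ0 σ1 Φ ≠ 0 := hN0.ne'
  have k1 : ∀ u L : ℝ, L ≠ 0 → u / (2 * σ1 * L) * (L * u / (2 * σ1)) = u ^ 2 / (4 * σ1 ^ 2) := by
    intro u L hL
    field_simp
    ring
  have k2 : ∀ w L : ℝ, L ≠ 0 → w / L * (L * w) = w ^ 2 := by
    intro w L hL
    field_simp
  clear hb0 hb1 hb2 ha hb hcne hcpos hcab hΔpos hsΔ hspos hsdef hA0 hB0 hs2 hsq habs1 habs2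
    hssum hs2' hL1sq hL2sq hK0 hN0
  fin_cases i <;> fin_cases j <;>
    simp only [lI, rI, l1, l2, l3, l4, r1, r2, r3, r4, dotProduct, Fin.sum_univ_four,
      Matrix.cons_val_zero, Matrix.cons_val_one, Matrix.head_cons, Matrix.cons_val_two,
      Matrix.tail_cons, Matrix.cons_val_three, Pi.smul_apply, smul_eq_mul, Fin.isValue,
      reduceIte]
  · refine dual_aux hKne ?_
    linear_combination k1 (lam1 c1 c2 σ0 σ1 Φ ^ 2 - bF c2 σ1 Φ) _ hL1 + k2 (Φ 1) _ hL1 - hKv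
  · refine dual_aux0 ?_
    linear_combination (1 + lam2 c1 c2 σ0 σ1 Φ / lam1 c1 c2 σ0 σ1 Φ) * hpp
  · refine dual_aux0 ?_
    linear_combination (1 - lam2 c1 c2 σ0 σ1 Φ / lam1 c1 c2 σ0 σ1 Φ) * hpp
  · refine dual_aux0 ?_
    linear_combination (-1 : ℝ) * k1 (lam1 c1 c2 σ0 σ1 Φ ^ 2 - bF c2 σ1 Φ) _ hL1 -
      k2 (Φ 1) _ hL1
  · refine dual_aux0 ?_
    linear_combination (1 + lam1 c1 c2 σ0 σ1 Φ / lam2 c1 c2 σ0 σ1 Φ) * hpp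
  · refine dual_aux hNne ?_
    linear_combination k1 (lam2 c1 c2 σ0 σ1 Φ ^ 2 - bF c2 σ1 Φ) _ hL2 + k2 (Φ 1) _ hL2 - hNv
  · refine dual_aux0 ?_
    linear_combination (-1 : ℝ) * k1 (lam2 c1 c2 σ0 σ1 Φ ^ 2 - bF c2 σ1 Φ) _ hL2 -
      k2 (Φ 1) _ hL2
  · refine dual_aux0 ?_
    linear_combination (1 - lam1 c1 c2 σ0 σ1 Φ / lam2 c1 c2 σ0 σ1 Φ) * hpp
  · refine dual_aux0 ?_
    linear_combination (1 - lam1 c1 c2 σ0 σ1 Φ / lam2 c1 c2 σ0 σ1 Φ) * hpp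
  · refine dual_aux0 ?_
    linear_combination (-1 : ℝ) * k1 (lam2 c1 c2 σ0 σ1 Φ ^ 2 - bF c2 σ1 Φ) _ hL2 -
      k2 (Φ 1) _ hL2
  · refine dual_aux hNne ?_
    linear_combination k1 (lam2 c1 c2 σ0 σ1 Φ ^ 2 - bF c2 σ1 Φ) _ hL2 + k2 (Φ 1) _ hL2 - hNv
  · refine dual_aux0 ?_
    linear_combination (1 + lam1 c1 c2 σ0 σ1 Φ / lam2 c1 c2 σ0 σ1 Φ) * hpp
  · refine dual_aux0 ?_
    linear_combination (-1 : ℝ) * k1 (lam1 c1 c2 σ0 σ1 Φ ^ 2 - bF c2 σ1 Φ) _ hL1 -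
      k2 (Φ 1) _ hL1
  · refine dual_aux0 ?_
    linear_combination (1 - lam2 c1 c2 σ0 σ1 Φ / lam1 c1 c2 σ0 σ1 Φ) * hpp
  · refine dual_aux0 ?_
    linear_combination (1 + lam2 c1 c2 σ0 σ1 Φ / lam1 c1 c2 σ0 σ1 Φ) * hpp
  · refine dual_aux hKne ?_
    linear_combination k1 (lam1 c1 c2 σ0 σ1 Φ ^ 2 - bF c2 σ1 Φ) _ hL1 + k2 (Φ 1) _ hL1 - hKv

end ElasticIP
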